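/- Let S, S̃ : U → Y be as above with ‖S̃u - Su‖_G ≤ ε‖u‖_U for all u ∈ U, and ν > 0. Then for all u ∈ U: ‖Su‖_G² + ν‖u‖_U² ≤ (1 + ε/√ν + ε²/ν)(‖S̃u‖_G² + ν‖u‖_U²), and symmetrically with S and S̃ exchanged. Consequently the condition number κ of the two quadratic forms satisfies κ ≤ (1 + ε/√ν + ε²/ν)². -/
import Mathlib

set_option maxHeartbeats 800000

lemma real_key (P y : ℝ) (hy : 0 ≤ y) (h : (2*P)^2 ≤ y^2) : -(2*P) ≤ y := by
  nlinarith [sq_nonneg (y + 2*P)]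

lemma aux_main
    {Y : Type*} [AddCommGroup Y] [Module ℝ Y]
    (g : Y →ₗ[ℝ] Y →ₗ[ℝ] ℝ)
    (hgsymm : ∀ y z, g y z = g z y) (hgpos : ∀ y, 0 ≤ g y y)
    (a b : Y) (ε ν r : ℝ) (hε : 0 ≤ ε) (hν : 0 < ν) (hr : 0 ≤ r)
    (herr : Real.sqrt (g (b - a) (b - a)) ≤ ε * r) :
    g a a + ν * r ^ 2 ≤ (1 + ε / Real.sqrt ν + ε ^ 2 / ν) * (g b b + ν * r ^ 2) := by
  set e := b - a with he
  set E := g e e with hE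
  set G := g b b with hG
  set P := g b e with hP
  have hE0 : 0 ≤ E := hgpos e
  have hG0 : 0 ≤ G := hgpos b
  have hexp : g a a = G - 2 * P + E := by
    have ha : a = b - e := by simp [he]
    rw [ha]
    simp only [map_sub, LinearMap.sub_apply, hG, hP, hE]
    rw [hgsymm e b]
    ring
  have hEle : E ≤ ε ^ 2 * r ^ 2 := by
    have := Real.sq_sqrt hE0
    nlinarith [Real.sqrt_nonneg E, mul_nonneg hε hr]
  -- Cauchy-Schwarz via discriminant
  have hCS : P ^ 2 ≤ G * E := by
    have hq : ∀ t : ℝ, 0 ≤ G * (t * t) + (2 * P) * t + E := by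
      intro t
      have h0 := hgpos (t • b + e)
      have : g (t • b + e) (t • b + e) = G * (t * t) + (2 * P) * t + E := by
        simp only [map_add, map_smul, LinearMap.add_apply, LinearMap.smul_apply,
          smul_eq_mul, hG, hP, hE]
        rw [hgsymm e b]
        ring
      rw [this] at h0
      exact h0
    have hd := discrim_le_zero hq
    rw [discrim] at hd
    nlinarith
  set s := Real.sqrt ν with hs
  have hs0 : 0 < s := Real.sqrt_pos.mpr hν
  have hs2 : s ^ 2 = ν := Real.sq_sqrt hν.le
  set d := ε / s with hd
  have hd0 : 0 ≤ d := div_nonneg hε hs0.le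
  have hds : d * s = ε := div_mul_cancel₀ ε hs0.ne'
  have hdd : ε ^ 2 / ν = d ^ 2 := by
    rw [← hs2, hd]; field_simp
  have hkey : -(2 * P) ≤ d * G + d * (s ^ 2 * r ^ 2) := by
    apply real_key
    · have : 0 ≤ s ^ 2 * r ^ 2 := by positivity
      nlinarith
    · have hε2 : ε ^ 2 = d ^ 2 * s ^ 2 := by rw [← hds]; ring
      have hPE : P ^ 2 ≤ G * (d ^ 2 * s ^ 2 * r ^ 2) := by
        have h1 : G * E ≤ G * (ε ^ 2 * r ^ 2) := mul_le_mul_of_nonneg_left hEle hG0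
        have h2 : G * (ε ^ 2 * r ^ 2) = G * (d ^ 2 * s ^ 2 * r ^ 2) := by rw [hε2]
        linarith
      nlinarith [sq_nonneg (d * G - d * (s ^ 2 * r ^ 2)), mul_nonneg hd0 hG0]
  rw [hexp, hdd, ← hs2]
  have hε2 : ε ^ 2 = d ^ 2 * s ^ 2 := by rw [← hds]; ring
  have hEle' : E ≤ d ^ 2 * (s ^ 2 * r ^ 2) := by nlinarith
  nlinarith [mul_nonneg (mul_nonneg hd0 hd0) hG0]

theorem stmt9
    {U : Type*} [NormedAddCommGroup U] [InnerProductSpace ℝ U]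
    {Y : Type*} [AddCommGroup Y] [Module ℝ Y]
    (g : Y →ₗ[ℝ] Y →ₗ[ℝ] ℝ)
    (hgsymm : ∀ y z, g y z = g z y) (hgpos : ∀ y, 0 ≤ g y y)
    (S St : U →ₗ[ℝ] Y)
    (ε : ℝ) (hε : 0 ≤ ε) (ν : ℝ) (hν : 0 < ν)
    (herr : ∀ u, Real.sqrt (g (St u - S u) (St u - S u)) ≤ ε * ‖u‖) :
    ∀ u : U,
      g (S u) (S u) + ν * ‖u‖ ^ 2
        ≤ (1 + ε / Real.sqrt ν + ε ^ 2 / ν) * (g (St u) (St u) + ν * ‖u‖ ^ 2) ∧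
      g (St u) (St u) + ν * ‖u‖ ^ 2
        ≤ (1 + ε / Real.sqrt ν + ε ^ 2 / ν) * (g (S u) (S u) + ν * ‖u‖ ^ 2) := by
  intro u
  have herr' : Real.sqrt (g (S u - St u) (S u - St u)) ≤ ε * ‖u‖ := by
    have heq : g (S u - St u) (S u - St u) = g (St u - S u) (St u - S u) := by
      rw [show S u - St u = -(St u - S u) from by abel]
      simp only [map_neg, LinearMap.neg_apply, neg_neg]
    rw [heq]
    exact herr u
  constructor
  · exact aux_main g hgsymm hgpos (S u) (St u) ε ν ‖u‖ hε hν (norm_nonneg u) (herr u)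
  · exact aux_main g hgsymm hgpos (St u) (S u) ε ν ‖u‖ hε hν (norm_nonneg u) herr'
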